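/- The 24 vectors of G_p partition into six sets of four pairwise orthogonal vectors (six orthogonal bases of ℝ^4); equivalently, the orthogonality graph G_p contains six vertex-disjoint 4-cliques covering all vertices. -/

import Mathlib

/-- The 24 vectors in ℝ⁴ defining Piovesan's graph `G_p`. -/
def piovesanVecs : Fin 24 → (Fin 4 → ℝ) :=
  ![![1,0,0,0], ![0,1,0,0], ![0,0,1,0], ![0,0,0,1],
    ![0,1,1,0], ![1,0,0,-1], ![1,0,0,1], ![0,1,-1,0],
    ![1,1,1,1], ![1,-1,1,-1], ![1,-1,-1,1], ![1,1,-1,-1],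
    ![1,-1,0,0], ![1,1,0,0], ![0,0,1,1], ![0,0,1,-1],
    ![-1,1,1,1], ![1,1,1,-1], ![1,-1,1,1], ![1,1,-1,1],
    ![1,0,1,0], ![0,1,0,1], ![1,0,-1,0], ![0,1,0,-1]]

/-- The orthogonality graph `G_p` on the 24 vectors. -/
def Gp : SimpleGraph (Fin 24) :=
  SimpleGraph.fromRel (fun i j => dotProduct (piovesanVecs i) (piovesanVecs j) = 0)

/-- The vertices of `G_p` partition into six 4-cliques (six orthogonal bases of ℝ⁴). -/
theorem Gp_partition_six_cliques :
    ∃ c : Fin 24 → Fin 6,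
      (∀ i j, i ≠ j → c i = c j → Gp.Adj i j) ∧
      (∀ k : Fin 6, (Finset.univ.filter (fun i => c i = k)).card = 4) := by
  refine ⟨![0,0,0,0,1,1,1,1,2,2,2,2,3,3,3,3,4,4,4,4,5,5,5,5], ?_, by decide⟩
  intro i j hne hc
  simp only [Gp, SimpleGraph.fromRel_adj]
  fin_cases i <;> fin_cases j <;>
    first
      | exact absurd rfl hne
      | exact absurd hc (by decide)
      | exact ⟨hne, Or.inl (by norm_num [piovesanVecs, dotProduct, Fin.sum_univ_four, Matrix.cons_val_two, Matrix.cons_val_three])⟩
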